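/- Let n, p be natural numbers, let Q be an n×n real diagonal matrix with strictly positive diagonal entries, let P be an n×n real symmetric positive definite matrix, let A be an n×n real matrix, let B be an n×p real matrix, and let σ > 0. Suppose (i) Q·P·A + Aᵀ·P·Q + σ·B·Bᵀ is negative semidefinite and (ii) Q·P·B = B. Then for all x ∈ ℝⁿ and u ∈ ℝᵖ: xᵀ·Q·P·(A·x + B·u) ≤ ⟨Bᵀx, u⟩ − (σ/2)·‖Bᵀx‖². (Consequently, along every solution of Q·ẋ = A·x + B·u the storage function H(x) = ½·xᵀ·Q·P·Q·x satisfies Ḣ ≤ yᵀu − (σ/2)·yᵀy with output y = Bᵀx, i.e., the cluster dynamics are output strictly equilibrium-independent passive with respect to the exogenous input currents and the bus voltage errors.) -/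
import Mathlib


open Matrix

/-- LMI condition of Theorem 2 and the dissipation inequality it implies: if
Q·P·A + Aᵀ·P·Q + σ·B·Bᵀ ⪯ 0 and Q·P·B = B, then along the cluster dynamics
Q·ẋ = A·x + B·u the storage H(x) = ½xᵀQPQx satisfies
Ḣ = xᵀQP(Ax + Bu) ≤ yᵀu − (σ/2)·yᵀy with output y = Bᵀx. -/
theorem cluster_LMI_OSEIP
    (n p : ℕ) (d : Fin n → ℝ) (hd : ∀ i, 0 < d i)
    (Q : Matrix (Fin n) (Fin n) ℝ) (hQ : Q = Matrix.diagonal d)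
    (P : Matrix (Fin n) (Fin n) ℝ) (hP : P.PosDef)
    (A : Matrix (Fin n) (Fin n) ℝ) (B : Matrix (Fin n) (Fin p) ℝ)
    (σ : ℝ) (hσ : 0 < σ)
    (hLMI : ∀ x : Fin n → ℝ, x ⬝ᵥ (Q * P * A + Aᵀ * P * Q + σ • (B * Bᵀ)).mulVec x ≤ 0)
    (hQPB : Q * P * B = B) :
    ∀ (x : Fin n → ℝ) (u : Fin p → ℝ),
      x ⬝ᵥ (Q * P).mulVec (A.mulVec x + B.mulVec u) ≤
        (Bᵀ.mulVec x) ⬝ᵥ u - (σ / 2) * ((Bᵀ.mulVec x) ⬝ᵥ (Bᵀ.mulVec x)) := by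
  intro x u
  have hPsymm : Pᵀ = P := hP.1.eq
  have hQsymm : Qᵀ = Q := by rw [hQ]; exact Matrix.diagonal_transpose d
  -- symmetry of the two quadratic terms
  have hsym : x ⬝ᵥ (Aᵀ * P * Q).mulVec x = x ⬝ᵥ (Q * P * A).mulVec x := by
    have ht : (Aᵀ * P * Q)ᵀ = Q * P * A := by
      simp [Matrix.transpose_mul, hPsymm, hQsymm, Matrix.mul_assoc]
    rw [← ht, Matrix.dotProduct_mulVec, Matrix.mulVec_transpose,
      dotProduct_comm]
  have hBB : x ⬝ᵥ (B * Bᵀ).mulVec x = (Bᵀ.mulVec x) ⬝ᵥ (Bᵀ.mulVec x) := by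
    rw [← Matrix.mulVec_mulVec, Matrix.dotProduct_mulVec, Matrix.mulVec_transpose]
  have key := hLMI x
  rw [Matrix.add_mulVec, Matrix.add_mulVec, Matrix.smul_mulVec,
    dotProduct_add, dotProduct_add, dotProduct_smul,
    hsym, hBB] at key
  -- so QPA quadratic term ≤ -(σ/2) * ‖Bᵀx‖²
  have hA : x ⬝ᵥ (Q * P * A).mulVec x ≤
      -(σ / 2) * ((Bᵀ.mulVec x) ⬝ᵥ (Bᵀ.mulVec x)) := by
    simp only [smul_eq_mul] at key
    nlinarith [key]
  have hBu : x ⬝ᵥ (Q * P).mulVec (B.mulVec u) = (Bᵀ.mulVec x) ⬝ᵥ u := by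
    rw [Matrix.mulVec_mulVec, hQPB, Matrix.dotProduct_mulVec,
      Matrix.mulVec_transpose]
  have hAx : x ⬝ᵥ (Q * P).mulVec (A.mulVec x) = x ⬝ᵥ (Q * P * A).mulVec x := by
    rw [Matrix.mulVec_mulVec]
  rw [Matrix.mulVec_add, dotProduct_add, hAx, hBu]
  linarith
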